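/- arXiv:2108.13242 — 2 statements merged into one kernel-verified Lean document; each statement's English description precedes it below -/
import Mathlib

section
/- Let n ≥ 1, fix an aperture γ > 1, let 0 < p, q < ∞ and s > 0, and let μ be a positive Borel measure on Bn. If A_{μ,s} : H^p → L^q(Sn) is bounded, then for every positive integer m the operator A_{μ,ms} : H^{mp} → L^{mq}(Sn) is bounded, and ‖A_{μ,ms}‖_{H^{mp}→L^{mq}(Sn)} ≤ ‖A_{μ,s}‖_{H^p→L^q(Sn)}^{1/m}. -/
open MeasureTheory Metric Set
open scoped ENNReal

noncomputable section

instance CnMeasurableSpace (n : ℕ) : MeasurableSpace (EuclideanSpace ℂ (Fin n)) := borel _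
instance CnBorelSpace (n : ℕ) : BorelSpace (EuclideanSpace ℂ (Fin n)) := ⟨rfl⟩

/-- `ℂⁿ` as a Euclidean space. -/
abbrev Cn (n : ℕ) := EuclideanSpace ℂ (Fin n)

/-- The open unit ball of `ℂⁿ`. -/
def Bn (n : ℕ) : Set (Cn n) := Metric.ball 0 1

/-- The unit sphere of `ℂⁿ`. -/
def Sph (n : ℕ) : Set (Cn n) := Metric.sphere 0 1

/-- The normalized surface measure on the unit sphere `Sph n`, realized as a Borel measure
on `ℂⁿ`: the pushforward of normalized Lebesgue measure on the punctured unit ball under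
the radial projection `z ↦ z/‖z‖`.  It is supported on the sphere and has total mass 1. -/
def sphMeasure (n : ℕ) : Measure (Cn n) :=
  (volume (Bn n))⁻¹ • Measure.map (fun z => ‖z‖⁻¹ • z) (volume.restrict (Bn n \ {0}))

/-- Korányi admissible approach region `Γ_γ(ζ)` of aperture `γ`. -/
def Koranyi (n : ℕ) (γ : ℝ) (ζ : Cn n) : Set (Cn n) :=
  {z | z ∈ Bn n ∧ ‖1 - (inner ℂ z ζ : ℂ)‖ < γ / 2 * (1 - ‖z‖ ^ 2)}

/-- The Hardy norm `‖f‖_{H^p}`, valued in `ℝ≥0∞`. -/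
def hardyNorm (n : ℕ) (p : ℝ) (f : Cn n → ℂ) : ℝ≥0∞ :=
  (⨆ r : Ioo (0 : ℝ) 1,
    ∫⁻ ζ, ENNReal.ofReal (‖f ((r : ℝ) • ζ)‖ ^ p) ∂sphMeasure n) ^ (1 / p)

/-- Membership in the Hardy space `H^p`. -/
def MemHp (n : ℕ) (p : ℝ) (f : Cn n → ℂ) : Prop :=
  DifferentiableOn ℂ f (Bn n) ∧ hardyNorm n p f < ∞

/-- The `L^q` norm (w.r.t. normalized surface measure) of an `ℝ≥0∞`-valued function. -/
def lqNorm (n : ℕ) (q : ℝ) (h : Cn n → ℝ≥0∞) : ℝ≥0∞ :=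
  (∫⁻ ζ, h ζ ^ q ∂sphMeasure n) ^ (1 / q)

/-- The area operator `A_{μ,s} f(ζ)`. -/
def areaOp (n : ℕ) (γ s : ℝ) (μ : Measure (Cn n)) (f : Cn n → ℂ) (ζ : Cn n) : ℝ≥0∞ :=
  (∫⁻ z in Koranyi n γ ζ,
      ENNReal.ofReal (‖f z‖ ^ s / (1 - ‖z‖ ^ 2) ^ n) ∂μ) ^ (1 / s)

/-- `A_{μ,s} : H^p → L^q(Sn)` is bounded. -/
def BddArea (n : ℕ) (γ p q s : ℝ) (μ : Measure (Cn n)) : Prop :=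
  ∃ C : ℝ, 0 < C ∧
    ∀ f : Cn n → ℂ, MemHp n p f →
      lqNorm n q (areaOp n γ s μ f) ≤ ENNReal.ofReal C * hardyNorm n p f

/-- Operator norm of `A_{μ,s} : H^p → L^q(Sn)` (the least admissible constant). -/
def areaOpNorm (n : ℕ) (γ p q s : ℝ) (μ : Measure (Cn n)) : ℝ≥0∞ :=
  sInf {C : ℝ≥0∞ | ∀ f : Cn n → ℂ, MemHp n p f →
    lqNorm n q (areaOp n γ s μ f) ≤ C * hardyNorm n p f}

/-- Non-isotropic ball `B_δ(ξ)`. -/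
def nonisoBall (n : ℕ) (δ : ℝ) (ξ : Cn n) : Set (Cn n) :=
  {z | z ∈ Bn n ∧ ‖1 - (inner ℂ z ξ : ℂ)‖ < δ}

/-- Carleson constant `‖μ‖_{CM_α}`. -/
def carlesonNorm (n : ℕ) (α : ℝ) (μ : Measure (Cn n)) : ℝ≥0∞ :=
  ⨆ (ξ : Cn n) (_ : ξ ∈ Sph n) (δ : ℝ) (_ : 0 < δ),
    μ (nonisoBall n δ ξ) / ENNReal.ofReal (δ ^ ((n : ℝ) * α))

/-- `μ` is an `α`-Carleson measure. -/
def IsCarleson (n : ℕ) (α : ℝ) (μ : Measure (Cn n)) : Prop := carlesonNorm n α μ < ∞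

/-- `μ̃(ζ) = ∫_{Γ_γ(ζ)} (1-|z|²)^{-n} dμ(z)`. -/
def muTilde (n : ℕ) (γ : ℝ) (μ : Measure (Cn n)) (ζ : Cn n) : ℝ≥0∞ :=
  ∫⁻ z in Koranyi n γ ζ, ENNReal.ofReal (((1 - ‖z‖ ^ 2) ^ n)⁻¹) ∂μ

/-- Bergman metric ball `D(a,r)`. -/
def bergmanBall (n : ℕ) (a : Cn n) (r : ℝ) : Set (Cn n) :=
  {z | z ∈ Bn n ∧
    1 - Real.tanh r ^ 2 <
      (1 - ‖a‖ ^ 2) * (1 - ‖z‖ ^ 2) / ‖1 - (inner ℂ z a : ℂ)‖ ^ 2}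

/-- `μ̂_t(z) = μ(D(z,2t))/(1-|z|)^n`. -/
def muHat (n : ℕ) (t : ℝ) (μ : Measure (Cn n)) (z : Cn n) : ℝ≥0∞ :=
  μ (bergmanBall n z (2 * t)) / ENNReal.ofReal ((1 - ‖z‖) ^ n)

/-- The closed support of a measure. -/
def msupport (n : ℕ) (μ : Measure (Cn n)) : Set (Cn n) :=
  {z | ∀ U : Set (Cn n), IsOpen U → z ∈ U → 0 < μ U}

/-- Radial derivative `Rf(z)`: the Fréchet derivative of `f` at `z` applied to `z`. -/
def radialDeriv (n : ℕ) (f : Cn n → ℂ) (z : Cn n) : ℂ := fderiv ℂ f z z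

/-- Normalized volume measure on `ℂⁿ` (so that the unit ball has measure 1). -/
def dvol (n : ℕ) : Measure (Cn n) := (volume (Bn n))⁻¹ • volume

/-- The inner integral in Proposition 1:
`∫_{Γ_γ(ζ) ∩ spt μ} |Rf(z)| μ̂_t(z)^{-1/2} (1-|z|²)^{1-n} dμ(z)`. -/
def prop1Inner (n : ℕ) (γ t : ℝ) (μ : Measure (Cn n)) (f : Cn n → ℂ) (ζ : Cn n) : ℝ≥0∞ :=
  ∫⁻ z in Koranyi n γ ζ ∩ msupport n μ,
    ENNReal.ofReal (‖radialDeriv n f z‖) * muHat n t μ z ^ (-(1 / 2) : ℝ) *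
      ENNReal.ofReal ((1 - ‖z‖ ^ 2) ^ ((1 : ℝ) - (n : ℝ))) ∂μ

/-- The set of admissible constants `C_μ` in condition (ii) of Proposition 1. -/
def prop1Consts (n : ℕ) (γ t τ : ℝ) (μ : Measure (Cn n)) : Set ℝ≥0∞ :=
  {K | ∀ f : Cn n → ℂ, MemHp n τ f →
    (∫⁻ ζ, prop1Inner n γ t μ f ζ ^ (2 * τ / (2 + τ)) ∂sphMeasure n) ≤
      K * hardyNorm n τ f ^ (2 * τ / (2 + τ))}

/-- The integral `∫_{Bn ∩ spt μ} |g|^{p/4} |Rf| μ̂_t^{-1/2} (1-|z|²) dμ` of Corollary 1. -/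
def cor1Int (n : ℕ) (t p : ℝ) (μ : Measure (Cn n)) (g f : Cn n → ℂ) : ℝ≥0∞ :=
  ∫⁻ z in Bn n ∩ msupport n μ,
    ENNReal.ofReal (‖g z‖ ^ (p / 4)) *
      ENNReal.ofReal (‖radialDeriv n f z‖) * muHat n t μ z ^ (-(1 / 2) : ℝ) *
      ENNReal.ofReal (1 - ‖z‖ ^ 2) ∂μ

/-- The set of admissible constants `K_μ` in Corollary 1. -/
def cor1Consts (n : ℕ) (t p : ℝ) (μ : Measure (Cn n)) : Set ℝ≥0∞ :=
  {K | ∀ g f : Cn n → ℂ, MemHp n p g → MemHp n 4 f →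
    cor1Int n t p μ g f ≤ K * hardyNorm n p g ^ (p / 4) * hardyNorm n 4 f}

/-- The integral `∫_{Bn ∩ spt μ} |g|^τ |Rf|^τ μ̂_t^{-τ/2} (1-|z|²)^τ dμ`. -/
def prop2Int (n : ℕ) (t τ : ℝ) (μ : Measure (Cn n)) (g f : Cn n → ℂ) : ℝ≥0∞ :=
  ∫⁻ z in Bn n ∩ msupport n μ,
    ENNReal.ofReal (‖g z‖ ^ τ * ‖radialDeriv n f z‖ ^ τ) *
      muHat n t μ z ^ (-(τ / 2)) * ENNReal.ofReal ((1 - ‖z‖ ^ 2) ^ τ) ∂μ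

/-- Supremum of `prop2Int` over unit-norm functions `f, g` in `H^P`. -/
def prop2Sup (n : ℕ) (t τ P : ℝ) (μ : Measure (Cn n)) : ℝ≥0∞ :=
  ⨆ (f : Cn n → ℂ) (_ : MemHp n P f ∧ hardyNorm n P f = 1)
    (g : Cn n → ℂ) (_ : MemHp n P g ∧ hardyNorm n P g = 1),
    prop2Int n t τ μ g f

lemma abs_pow_mul_rpow (a : ℝ) (ha : 0 ≤ a) (m : ℕ) (s : ℝ) :
    (a ^ m) ^ s = a ^ ((m : ℝ) * s) := by
  rw [← Real.rpow_natCast a m, ← Real.rpow_mul ha]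

lemma areaOp_pow (n : ℕ) (γ s : ℝ) (hs : 0 < s) (μ : Measure (Cn n)) (m : ℕ) (hm : 0 < m)
    (f : Cn n → ℂ) (ζ : Cn n) :
    areaOp n γ ((m : ℝ) * s) μ f ζ
      = areaOp n γ s μ (fun z => f z ^ m) ζ ^ ((1 : ℝ) / m) := by
  have hm' : (m : ℝ) ≠ 0 := Nat.cast_ne_zero.mpr hm.ne'
  unfold areaOp
  rw [← ENNReal.rpow_mul]
  have h1 : (1 / s) * (1 / (m : ℝ)) = 1 / ((m : ℝ) * s) := by
    field_simp
  rw [h1]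
  congr 1
  refine lintegral_congr fun z => ?_
  rw [norm_pow, abs_pow_mul_rpow _ (norm_nonneg _)]

lemma hardyNorm_pow (n : ℕ) (p : ℝ) (hp : 0 < p) (m : ℕ) (hm : 0 < m) (f : Cn n → ℂ) :
    hardyNorm n p (fun z => f z ^ m) = hardyNorm n ((m : ℝ) * p) f ^ (m : ℝ) := by
  have hm' : (m : ℝ) ≠ 0 := Nat.cast_ne_zero.mpr hm.ne'
  unfold hardyNorm
  rw [← ENNReal.rpow_mul]
  have h1 : (1 / ((m : ℝ) * p)) * (m : ℝ) = 1 / p := by field_simp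
  rw [h1]
  congr 1
  refine iSup_congr fun r => ?_
  refine lintegral_congr fun ζ => ?_
  rw [norm_pow, abs_pow_mul_rpow _ (norm_nonneg _)]

lemma MemHp_pow (n : ℕ) (p : ℝ) (hp : 0 < p) (m : ℕ) (hm : 0 < m) (f : Cn n → ℂ)
    (hf : MemHp n ((m : ℝ) * p) f) : MemHp n p (fun z => f z ^ m) :=
  ⟨hf.1.pow m, by
    rw [hardyNorm_pow n p hp m hm f]
    exact ENNReal.rpow_lt_top_of_nonneg (by positivity) hf.2.ne⟩

lemma key_bound (n : ℕ) (γ p q s : ℝ) (hp : 0 < p) (hq : 0 < q) (hs : 0 < s)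
    (μ : Measure (Cn n)) (m : ℕ) (hm : 0 < m) (C : ℝ≥0∞)
    (hC : ∀ f : Cn n → ℂ, MemHp n p f →
      lqNorm n q (areaOp n γ s μ f) ≤ C * hardyNorm n p f) :
    ∀ f : Cn n → ℂ, MemHp n ((m : ℝ) * p) f →
      lqNorm n ((m : ℝ) * q) (areaOp n γ ((m : ℝ) * s) μ f) ≤
        C ^ ((1 : ℝ) / m) * hardyNorm n ((m : ℝ) * p) f := by
  intro f hf
  have hm' : (m : ℝ) ≠ 0 := Nat.cast_ne_zero.mpr hm.ne'
  set g : Cn n → ℂ := fun z => f z ^ m with hg_def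
  have hg : MemHp n p g := MemHp_pow n p hp m hm f hf
  have hA : lqNorm n ((m : ℝ) * q) (areaOp n γ ((m : ℝ) * s) μ f)
      = lqNorm n q (areaOp n γ s μ g) ^ ((1 : ℝ) / m) := by
    unfold lqNorm
    rw [← ENNReal.rpow_mul]
    have h1 : (1 / q) * (1 / (m : ℝ)) = 1 / ((m : ℝ) * q) := by field_simp
    rw [h1]
    congr 1
    refine lintegral_congr fun ζ => ?_
    rw [areaOp_pow n γ s hs μ m hm f ζ, ← ENNReal.rpow_mul]
    congr 1
    field_simp
  calc lqNorm n ((m : ℝ) * q) (areaOp n γ ((m : ℝ) * s) μ f)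
      = lqNorm n q (areaOp n γ s μ g) ^ ((1 : ℝ) / m) := hA
    _ ≤ (C * hardyNorm n p g) ^ ((1 : ℝ) / m) :=
        ENNReal.rpow_le_rpow (hC g hg) (by positivity)
    _ = C ^ ((1 : ℝ) / m) * hardyNorm n ((m : ℝ) * p) f := by
        rw [ENNReal.mul_rpow_of_nonneg _ _ (by positivity : (0:ℝ) ≤ 1 / m),
          hardyNorm_pow n p hp m hm f, ← ENNReal.rpow_mul,
          mul_one_div_cancel hm', ENNReal.rpow_one]

theorem stmt9 (n : ℕ) (hn : 1 ≤ n) (γ : ℝ) (hγ : 1 < γ) (p q s : ℝ)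
    (hp : 0 < p) (hq : 0 < q) (hs : 0 < s)
    (μ : Measure (Cn n)) (hμ : μ (Bn n)ᶜ = 0) (hbdd : BddArea n γ p q s μ) :
    ∀ m : ℕ, 0 < m →
      BddArea n γ ((m : ℝ) * p) ((m : ℝ) * q) ((m : ℝ) * s) μ ∧
      areaOpNorm n γ ((m : ℝ) * p) ((m : ℝ) * q) ((m : ℝ) * s) μ ≤
        areaOpNorm n γ p q s μ ^ (1 / (m : ℝ)) := by
  intro m hm
  have hm' : (m : ℝ) ≠ 0 := Nat.cast_ne_zero.mpr hm.ne'
  constructor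
  · obtain ⟨C, hC0, hC⟩ := hbdd
    refine ⟨C ^ ((1 : ℝ) / m), Real.rpow_pos_of_pos hC0 _, ?_⟩
    intro f hf
    have h := key_bound n γ p q s hp hq hs μ m hm (ENNReal.ofReal C) hC f hf
    rwa [ENNReal.ofReal_rpow_of_pos hC0] at h
  · unfold areaOpNorm
    set Sold := {C : ℝ≥0∞ | ∀ f : Cn n → ℂ, MemHp n p f →
      lqNorm n q (areaOp n γ s μ f) ≤ C * hardyNorm n p f} with hSold
    set Snew := {C : ℝ≥0∞ | ∀ f : Cn n → ℂ, MemHp n ((m : ℝ) * p) f →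
      lqNorm n ((m : ℝ) * q) (areaOp n γ ((m : ℝ) * s) μ f) ≤
        C * hardyNorm n ((m : ℝ) * p) f} with hSnew
    have hmem : ∀ C ∈ Sold, C ^ ((1 : ℝ) / m) ∈ Snew := fun C hC =>
      key_bound n γ p q s hp hq hs μ m hm C hC
    have h2 : (sInf Snew) ^ (m : ℝ) ≤ sInf Sold := by
      refine le_sInf fun C hC => ?_
      have h3 : sInf Snew ≤ C ^ ((1 : ℝ) / m) := sInf_le (hmem C hC)
      calc (sInf Snew) ^ (m : ℝ) ≤ (C ^ ((1 : ℝ) / m)) ^ (m : ℝ) :=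
            ENNReal.rpow_le_rpow h3 (by positivity)
        _ = C := by rw [← ENNReal.rpow_mul, one_div_mul_cancel hm', ENNReal.rpow_one]
    calc sInf Snew = ((sInf Snew) ^ (m : ℝ)) ^ ((1 : ℝ) / m) := by
          rw [← ENNReal.rpow_mul, mul_one_div_cancel hm', ENNReal.rpow_one]
      _ ≤ (sInf Sold) ^ ((1 : ℝ) / m) := ENNReal.rpow_le_rpow h2 (by positivity)
end
end

section
/- Let n ≥ 1, t > 0 and N a positive integer. Let {a_k} be a sequence in Bn such that Bn ⊆ ∪_k D(a_k, t) and every point of Bn belongs to at most N of the sets D(a_k, 4t). Then for every finite positive Borel measure μ on Bn: μ(Bn) ≤ N · Σ_{k : μ(D(a_k,4t)) > 0} μ(D(a_k,2t))² / μ(D(a_k,4t)). -/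
open MeasureTheory Metric Set
open scoped ENNReal

noncomputable section

lemma tanh_le_tanh_aux {x y : ℝ} (h : x ≤ y) : Real.tanh x ≤ Real.tanh y := by
  rw [Real.tanh_eq_sinh_div_cosh, Real.tanh_eq_sinh_div_cosh,
    div_le_div_iff₀ (Real.cosh_pos x) (Real.cosh_pos y)]
  have h1 : Real.sinh (x - y) ≤ 0 := Real.sinh_nonpos_iff.2 (by linarith)
  rw [Real.sinh_sub] at h1
  linarith

lemma tanh_nonneg_aux {x : ℝ} (hx : 0 ≤ x) : 0 ≤ Real.tanh x := by
  rw [Real.tanh_eq_sinh_div_cosh]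
  exact div_nonneg (Real.sinh_nonneg_iff.2 hx) (Real.cosh_pos x).le

lemma bergmanBall_mono' (n : ℕ) (a : Cn n) {r r' : ℝ} (h0 : 0 ≤ r) (h : r ≤ r') :
    bergmanBall n a r ⊆ bergmanBall n a r' := by
  intro z hz
  refine ⟨hz.1, lt_of_le_of_lt ?_ hz.2⟩
  have h1 : Real.tanh r ≤ Real.tanh r' := tanh_le_tanh_aux h
  have h2 : 0 ≤ Real.tanh r := tanh_nonneg_aux h0
  nlinarith

lemma measurableSet_bergmanBall' (n : ℕ) (a : Cn n) (r : ℝ) :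
    MeasurableSet (bergmanBall n a r) := by
  have h1 : MeasurableSet (Bn n) := measurableSet_ball
  have h2 : Measurable fun z : Cn n =>
      (1 - ‖a‖ ^ 2) * (1 - ‖z‖ ^ 2) / ‖1 - (inner ℂ z a : ℂ)‖ ^ 2 := by
    apply Measurable.div
    · exact (measurable_const.sub (measurable_norm.pow_const 2)).const_mul _
    · have hc : Continuous fun z : Cn n => ‖1 - (inner ℂ z a : ℂ)‖ ^ 2 :=
        (continuous_norm.comp
          (continuous_const.sub (continuous_id.inner continuous_const))).pow 2
      exact hc.measurable
  exact h1.inter (measurableSet_lt measurable_const h2)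

lemma tsum_cauchy_schwarz_aux {ι : Type*} [Countable ι] [MeasurableSpace ι]
    [MeasurableSingletonClass ι] (f g : ι → ℝ≥0∞) :
    ∑' k, f k * g k ≤
      (∑' k, f k ^ (2 : ℝ)) ^ (1 / 2 : ℝ) * (∑' k, g k ^ (2 : ℝ)) ^ (1 / 2 : ℝ) := by
  have hpq : Real.HolderConjugate 2 2 := Real.HolderConjugate.two_two
  have h := ENNReal.lintegral_mul_le_Lp_mul_Lq (Measure.count : Measure ι) hpq
    (measurable_of_countable f).aemeasurable (measurable_of_countable g).aemeasurable
  simpa [MeasureTheory.lintegral_count] using h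

lemma key_aux (N : ℕ) (M : ℝ≥0∞) (hMfin : M ≠ ∞) (b c : ℕ → ℝ≥0∞)
    (hbc : ∀ k, b k ≤ c k) (hcfin : ∀ k, c k ≠ ∞)
    (hM : M ≤ ∑' k, b k) (hT : ∑' k, c k ≤ (N : ℝ≥0∞) * M) :
    M ≤ (N : ℝ≥0∞) * ∑' k : {k : ℕ // 0 < c k}, b k ^ 2 / c k := by
  by_cases hM0 : M = 0
  · rw [hM0]; exact zero_le
  set S : ℝ≥0∞ := ∑' k : {k : ℕ // 0 < c k}, b (k : ℕ) ^ 2 / c (k : ℕ) with hSdef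
  have hsub : ∑' k : {k : ℕ // 0 < c k}, b (k : ℕ) = ∑' k, b k := by
    apply tsum_subtype_eq_of_support_subset
    intro k hk
    exact lt_of_lt_of_le (pos_iff_ne_zero.2 hk) (hbc k)
  have hpow : ∀ x : ℝ≥0∞, (x ^ (1 / 2 : ℝ)) ^ (2 : ℝ) = x := by
    intro x
    rw [← ENNReal.rpow_mul]
    norm_num
  have hsq : ∀ x : ℝ≥0∞, x ^ (2 : ℕ) = x ^ (2 : ℝ) := fun x => by
    rw [← ENNReal.rpow_natCast x 2]; norm_num
  have hpow2 : ∀ x : ℝ≥0∞, (x ^ (2 : ℝ)) ^ (1 / 2 : ℝ) = x := by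
    intro x
    rw [← ENNReal.rpow_mul]
    norm_num
  have key : ∑' k : {k : ℕ // 0 < c k}, b (k : ℕ) ≤
      S ^ (1 / 2 : ℝ) * (∑' k : {k : ℕ // 0 < c k}, c (k : ℕ)) ^ (1 / 2 : ℝ) := by
    have hcs := tsum_cauchy_schwarz_aux
      (fun k : {k : ℕ // 0 < c k} => (b (k : ℕ) ^ 2 / c (k : ℕ)) ^ (1 / 2 : ℝ))
      (fun k : {k : ℕ // 0 < c k} => c (k : ℕ) ^ (1 / 2 : ℝ))
    have hfg : ∀ k : {k : ℕ // 0 < c k},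
        (b (k : ℕ) ^ 2 / c (k : ℕ)) ^ (1 / 2 : ℝ) * c (k : ℕ) ^ (1 / 2 : ℝ) = b (k : ℕ) := by
      intro k
      rw [← ENNReal.mul_rpow_of_nonneg _ _ (by norm_num : (0:ℝ) ≤ 1 / 2),
        ENNReal.div_mul_cancel k.2.ne' (hcfin _), hsq, hpow2]
    calc ∑' k : {k : ℕ // 0 < c k}, b (k : ℕ)
        = ∑' k : {k : ℕ // 0 < c k},
            (b (k : ℕ) ^ 2 / c (k : ℕ)) ^ (1 / 2 : ℝ) * c (k : ℕ) ^ (1 / 2 : ℝ) :=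
          (tsum_congr hfg).symm
      _ ≤ (∑' k : {k : ℕ // 0 < c k}, ((b (k : ℕ) ^ 2 / c (k : ℕ)) ^ (1 / 2 : ℝ)) ^ (2 : ℝ))
            ^ (1 / 2 : ℝ) *
          (∑' k : {k : ℕ // 0 < c k}, (c (k : ℕ) ^ (1 / 2 : ℝ)) ^ (2 : ℝ)) ^ (1 / 2 : ℝ) := hcs
      _ = S ^ (1 / 2 : ℝ) * (∑' k : {k : ℕ // 0 < c k}, c (k : ℕ)) ^ (1 / 2 : ℝ) := by
          simp only [hpow, hSdef]
  have hTsub : ∑' k : {k : ℕ // 0 < c k}, c (k : ℕ) ≤ (N : ℝ≥0∞) * M := by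
    refine le_trans ?_ hT
    calc ∑' k : {k : ℕ // 0 < c k}, c (k : ℕ)
        = ∑' k : ↥{k : ℕ | 0 < c k}, c (k : ℕ) := rfl
      _ = ∑' k, ({k : ℕ | 0 < c k}).indicator c k := tsum_subtype _ c
      _ ≤ ∑' k, c k := ENNReal.tsum_le_tsum fun k => Set.indicator_le_self _ _ k
  have h1 : M ≤ S ^ (1 / 2 : ℝ) * ((N : ℝ≥0∞) * M) ^ (1 / 2 : ℝ) := by
    calc M ≤ ∑' k, b k := hM
      _ = ∑' k : {k : ℕ // 0 < c k}, b (k : ℕ) := hsub.symm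
      _ ≤ S ^ (1 / 2 : ℝ) * (∑' k : {k : ℕ // 0 < c k}, c (k : ℕ)) ^ (1 / 2 : ℝ) := key
      _ ≤ S ^ (1 / 2 : ℝ) * ((N : ℝ≥0∞) * M) ^ (1 / 2 : ℝ) := by
          gcongr
  have hMhalf0 : M ^ (1 / 2 : ℝ) ≠ 0 :=
    (ENNReal.rpow_pos (pos_iff_ne_zero.2 hM0) hMfin).ne'
  have hMhalfT : M ^ (1 / 2 : ℝ) ≠ ∞ :=
    ENNReal.rpow_ne_top_of_nonneg (by norm_num) hMfin
  have h2 : M ^ (1 / 2 : ℝ) ≤ S ^ (1 / 2 : ℝ) * (N : ℝ≥0∞) ^ (1 / 2 : ℝ) := by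
    rw [← ENNReal.mul_le_mul_iff_left hMhalf0 hMhalfT]
    calc M ^ (1 / 2 : ℝ) * M ^ (1 / 2 : ℝ) = M := by
          rw [← ENNReal.rpow_add _ _ hM0 hMfin]; norm_num
      _ ≤ S ^ (1 / 2 : ℝ) * ((N : ℝ≥0∞) * M) ^ (1 / 2 : ℝ) := h1
      _ = S ^ (1 / 2 : ℝ) * (N : ℝ≥0∞) ^ (1 / 2 : ℝ) * M ^ (1 / 2 : ℝ) := by
          rw [ENNReal.mul_rpow_of_nonneg _ _ (by norm_num : (0:ℝ) ≤ 1 / 2), mul_assoc]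
  calc M = (M ^ (1 / 2 : ℝ)) ^ (2 : ℝ) := (hpow M).symm
    _ ≤ (S ^ (1 / 2 : ℝ) * (N : ℝ≥0∞) ^ (1 / 2 : ℝ)) ^ (2 : ℝ) :=
        ENNReal.rpow_le_rpow h2 (by norm_num)
    _ = (N : ℝ≥0∞) * S := by
        rw [ENNReal.mul_rpow_of_nonneg _ _ (by norm_num : (0:ℝ) ≤ 2), hpow, hpow, mul_comm]

theorem stmt16 (n : ℕ) (hn : 1 ≤ n) (t : ℝ) (ht : 0 < t) (N : ℕ) (hN : 0 < N)
    (a : ℕ → Cn n) (hcover : Bn n ⊆ ⋃ k, bergmanBall n (a k) t)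
    (hoverlap : ∀ z ∈ Bn n, {k | z ∈ bergmanBall n (a k) (4 * t)}.Finite ∧
      {k | z ∈ bergmanBall n (a k) (4 * t)}.ncard ≤ N)
    (μ : Measure (Cn n)) (hfin : IsFiniteMeasure μ) :
    μ (Bn n) ≤ (N : ℝ≥0∞) * ∑' k : {k : ℕ // 0 < μ (bergmanBall n (a k) (4 * t))},
      μ (bergmanBall n (a (k : ℕ)) (2 * t)) ^ 2 / μ (bergmanBall n (a (k : ℕ)) (4 * t)) := by
  classical
  have hBsub : ∀ k, bergmanBall n (a k) (2 * t) ⊆ bergmanBall n (a k) (4 * t) :=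
    fun k => bergmanBall_mono' n (a k) (by linarith) (by linarith)
  refine key_aux N (μ (Bn n)) (measure_ne_top μ _)
    (fun k => μ (bergmanBall n (a k) (2 * t)))
    (fun k => μ (bergmanBall n (a k) (4 * t)))
    (fun k => measure_mono (hBsub k)) (fun k => measure_ne_top μ _) ?_ ?_
  · calc μ (Bn n) ≤ μ (⋃ k, bergmanBall n (a k) t) := measure_mono hcover
      _ ≤ ∑' k, μ (bergmanBall n (a k) t) := measure_iUnion_le _
      _ ≤ ∑' k, μ (bergmanBall n (a k) (2 * t)) := ENNReal.tsum_le_tsum fun k =>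
          measure_mono (bergmanBall_mono' n (a k) ht.le (by linarith))
  · -- overlap bound
    have hmeasA : ∀ k, MeasurableSet (bergmanBall n (a k) (4 * t)) :=
      fun k => measurableSet_bergmanBall' n (a k) _
    have h1 : ∑' k, μ (bergmanBall n (a k) (4 * t)) =
        ∫⁻ z, ∑' k, (bergmanBall n (a k) (4 * t)).indicator (1 : Cn n → ℝ≥0∞) z ∂μ := by
      rw [lintegral_tsum fun k => (measurable_one.indicator (hmeasA k)).aemeasurable]
      refine tsum_congr fun k => ?_
      rw [lintegral_indicator_one (hmeasA k)]
    rw [h1]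
    have h2 : ∀ z, ∑' k, (bergmanBall n (a k) (4 * t)).indicator (1 : Cn n → ℝ≥0∞) z ≤
        (Bn n).indicator (fun _ => (N : ℝ≥0∞)) z := by
      intro z
      by_cases hz : z ∈ Bn n
      · rw [Set.indicator_of_mem hz]
        obtain ⟨hfinz, hcard⟩ := hoverlap z hz
        have heq : ∀ k, (bergmanBall n (a k) (4 * t)).indicator (1 : Cn n → ℝ≥0∞) z =
            ({k | z ∈ bergmanBall n (a k) (4 * t)}).indicator (1 : ℕ → ℝ≥0∞) k := by
          intro k
          by_cases h : z ∈ bergmanBall n (a k) (4 * t) <;>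
            simp [Set.indicator, h]
        rw [tsum_congr heq]
        rw [tsum_eq_sum (s := hfinz.toFinset)
          (fun k hk => Set.indicator_of_notMem (fun hmem => hk (hfinz.mem_toFinset.2 hmem)) _)]
        calc ∑ k ∈ hfinz.toFinset,
              ({k | z ∈ bergmanBall n (a k) (4 * t)}).indicator (1 : ℕ → ℝ≥0∞) k
            = ∑ k ∈ hfinz.toFinset, (1 : ℝ≥0∞) := Finset.sum_congr rfl fun k hk => by
              simp [Set.indicator_of_mem (hfinz.mem_toFinset.1 hk)]
          _ = (hfinz.toFinset.card : ℝ≥0∞) := by simp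
          _ ≤ (N : ℝ≥0∞) := by
              rw [Nat.cast_le, ← Set.ncard_eq_toFinset_card _ hfinz]
              exact hcard
      · rw [Set.indicator_of_notMem hz]
        have : ∀ k, (bergmanBall n (a k) (4 * t)).indicator (1 : Cn n → ℝ≥0∞) z = 0 :=
          fun k => Set.indicator_of_notMem (fun hmem => hz hmem.1) _
        simp [this]
    calc ∫⁻ z, ∑' k, (bergmanBall n (a k) (4 * t)).indicator (1 : Cn n → ℝ≥0∞) z ∂μ
        ≤ ∫⁻ z, (Bn n).indicator (fun _ => (N : ℝ≥0∞)) z ∂μ := lintegral_mono h2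
      _ = (N : ℝ≥0∞) * μ (Bn n) := lintegral_indicator_const measurableSet_ball _
end
end
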